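/- In the N-class model with N = 2, κ ∈ (1,2), premiums c¹ = (θ₁, κθ₁), c² = (θ₂, κθ₂) with θ₁, θ₂ ∈ [μ, M/κ], and η given by η(t) = 1 − (1−k₂)e^{−k₁t} for t ≥ 0 and η(t) = k₂e^{k₁t} for t < 0 (k₁, k₂ ∈ (0,1)), let V* be the unique fixed point of the Bellman operator L_c. Then for every state (n,i) ∈ {1,2} × {1,2}, the infimum over b ≥ 0 defining (L_c V*)(n,i) is attained at the unique point b̄* := δ(κ−1)·[ η̄·θ₁ + (1−η̄)·θ₂ ], where η̄ := η(θ₂ − θ₁); in particular the optimal reporting barrier is the same for all four states and is strictly positive. -/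

import Mathlib

noncomputable section

open MeasureTheory Set

/-- Cumulative distribution function of the loss: point mass `p₀` at zero plus density `fL`. -/
def lossCdf (p₀ : ℝ) (fL : ℝ → ℝ) (x : ℝ) : ℝ := p₀ + ∫ ℓ in (0:ℝ)..x, fL ℓ

/-- Rate class after a bonus: `n↓ = max(n−1,1)` (classes are 0-indexed by `Fin N`). -/
def rdown {N : ℕ} (n : Fin N) : Fin N :=
  ⟨n.val - 1, lt_of_le_of_lt (Nat.sub_le _ _) n.isLt⟩

/-- Rate class after a malus: `n↑ = min(n+1,N)` (classes are 0-indexed by `Fin N`). -/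
def rup {N : ℕ} (n : Fin N) : Fin N :=
  if h : n.val + 1 < N then ⟨n.val + 1, h⟩ else n

/-- Company-switching probability `σ(n,i)`; company `0` is Company 1, company `1` is
Company 2, and `c i` is the premium schedule of company `i`. -/
def swProb {N : ℕ} (η : ℝ → ℝ) (c : Fin 2 → Fin N → ℝ) (n : Fin N) (i : Fin 2) : ℝ :=
  if i = 0 then 1 - η (c 1 (rdown n) - c 0 (rdown n))
  else η (c 1 (rdown n) - c 0 (rdown n))

/-- Continuation value after a bonus: `W↓(n,i;v)`. (`i + 1` in `Fin 2` is the other company.) -/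
def Wdown {N : ℕ} (η : ℝ → ℝ) (c : Fin 2 → Fin N → ℝ) (v : Fin N × Fin 2 → ℝ)
    (n : Fin N) (i : Fin 2) : ℝ :=
  (1 - swProb η c n i) * v (rdown n, i) + swProb η c n i * v (rdown n, i + 1)

/-- Continuation value after a malus: `W↑(n,i;v)`. -/
def Wup {N : ℕ} (η : ℝ → ℝ) (c : Fin 2 → Fin N → ℝ) (v : Fin N × Fin 2 → ℝ)
    (n : Fin N) (i : Fin 2) : ℝ :=
  (1 - swProb η c n i) * v (rup n, i) + swProb η c n i * v (rup n, i + 1)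

/-- One-step Bellman objective in the reporting barrier `b`. -/
def bellObj {N : ℕ} (p₀ δ : ℝ) (fL η : ℝ → ℝ) (c : Fin 2 → Fin N → ℝ)
    (v : Fin N × Fin 2 → ℝ) (x : Fin N × Fin 2) (b : ℝ) : ℝ :=
  δ * (c x.2 x.1 + (∫ ℓ in (0:ℝ)..b, ℓ * fL ℓ)
    + lossCdf p₀ fL b * Wdown η c v x.1 x.2
    + (1 - lossCdf p₀ fL b) * Wup η c v x.1 x.2)

/-- The Bellman operator `L_c`. -/
def bellOp {N : ℕ} (p₀ δ : ℝ) (fL η : ℝ → ℝ) (c : Fin 2 → Fin N → ℝ)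
    (v : Fin N × Fin 2 → ℝ) (x : Fin N × Fin 2) : ℝ :=
  ⨅ b : {b : ℝ // 0 ≤ b}, bellObj p₀ δ fL η c v x b.1

/-- The set of admissible premium pairs. -/
def premSet (N : ℕ) (μ M : ℝ) : Set (Fin 2 → Fin N → ℝ) :=
  {c | ∀ i : Fin 2, Monotone (c i) ∧ ∀ n : Fin N, c i n ∈ Set.Icc μ M}


/-- The 2-class premium schedules `c¹ = (θ₁, κθ₁)`, `c² = (θ₂, κθ₂)`. -/
def prem2 (κ θ₁ θ₂ : ℝ) : Fin 2 → Fin 2 → ℝ := fun i n =>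
  (if i = 0 then θ₁ else θ₂) * (if n = 0 then 1 else κ)

/-- The exponential choice function `η`. -/
def expEta (k₁ k₂ t : ℝ) : ℝ :=
  if 0 ≤ t then 1 - (1 - k₂) * Real.exp (-(k₁ * t)) else k₂ * Real.exp (k₁ * t)

/-- The closed-form optimal barrier `b̄* = δ(κ−1)(η̄θ₁ + (1−η̄)θ₂)` with `η̄ = η(θ₂−θ₁)`. -/
def barrier2 (δ κ k₁ k₂ θ₁ θ₂ : ℝ) : ℝ :=
  δ * (κ - 1) * (expEta k₁ k₂ (θ₂ - θ₁) * θ₁ + (1 - expEta k₁ k₂ (θ₂ - θ₁)) * θ₂)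


lemma aux_ii {g : ℝ → ℝ} (hg : IntegrableOn g (Ioi 0)) {a b : ℝ} (ha : 0 ≤ a) (hb : 0 ≤ b) :
    IntervalIntegrable g MeasureTheory.volume a b := by
  rw [intervalIntegrable_iff]
  exact hg.mono_set (fun x hx => (le_min ha hb).trans_lt hx.1)

lemma aux_split {fL : ℝ → ℝ} (hfint : IntegrableOn fL (Ioi 0))
    (hmint : IntegrableOn (fun ℓ => ℓ * fL ℓ) (Ioi 0)) (C : ℝ) {a b : ℝ}
    (ha : 0 ≤ a) (hb : 0 ≤ b) :
    ∫ ℓ in a..b, (ℓ - C) * fL ℓ = (∫ ℓ in a..b, ℓ * fL ℓ) - C * ∫ ℓ in a..b, fL ℓ := by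
  have h1 := aux_ii hmint ha hb
  have h2 := (aux_ii hfint ha hb).const_mul C
  have heq : (fun ℓ => (ℓ - C) * fL ℓ) = fun ℓ => ℓ * fL ℓ - C * fL ℓ := by funext ℓ; ring
  rw [heq, intervalIntegral.integral_sub h1 h2, intervalIntegral.integral_const_mul]

lemma aux_key_pos {fL : ℝ → ℝ} (hfpos : ∀ ℓ : ℝ, 0 < ℓ → 0 < fL ℓ)
    (hfint : IntegrableOn fL (Ioi 0)) (hmint : IntegrableOn (fun ℓ => ℓ * fL ℓ) (Ioi 0))
    {B b : ℝ} (hB : 0 < B) (hb : 0 ≤ b) (hne : b ≠ B) :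
    0 < ∫ ℓ in B..b, (ℓ - B) * fL ℓ := by
  rcases hne.lt_or_gt with h | h
  · have h1 : 0 < ∫ ℓ in b..B, (B - ℓ) * fL ℓ := by
      apply intervalIntegral.intervalIntegral_pos_of_pos_on
      · have := ((aux_ii hfint hb hB.le).const_mul B).sub (aux_ii hmint hb hB.le)
        simpa [sub_mul] using this
      · intro x hx
        exact mul_pos (sub_pos.mpr hx.2) (hfpos x (hb.trans_lt hx.1))
      · exact h
    have h2 : ∫ ℓ in B..b, (ℓ - B) * fL ℓ = ∫ ℓ in b..B, (B - ℓ) * fL ℓ := by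
      rw [intervalIntegral.integral_symm b B, ← intervalIntegral.integral_neg]
      congr 1; funext ℓ; ring
    rw [h2]; exact h1
  · apply intervalIntegral.intervalIntegral_pos_of_pos_on _ _ h
    · have := (aux_ii hmint hB.le hb).sub ((aux_ii hfint hB.le hb).const_mul B)
      simpa [sub_mul] using this
    · intro x hx
      exact mul_pos (sub_pos.mpr hx.1) (hfpos x (hB.trans hx.1))

lemma aux_nonneg (g : ℝ → ℝ) (hg : ∀ ℓ : ℝ, 0 < ℓ → 0 ≤ g ℓ) {b : ℝ} (hb : 0 ≤ b) :
    0 ≤ ∫ ℓ in (0:ℝ)..b, g ℓ := by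
  rw [intervalIntegral.integral_of_le hb]
  exact setIntegral_nonneg measurableSet_Ioc (fun x hx => hg x hx.1)

lemma aux_le_total (g : ℝ → ℝ) (hgint : IntegrableOn g (Ioi 0))
    (hg : ∀ ℓ : ℝ, 0 < ℓ → 0 ≤ g ℓ) {b : ℝ} (hb : 0 ≤ b) :
    (∫ ℓ in (0:ℝ)..b, g ℓ) ≤ ∫ ℓ in Ioi (0:ℝ), g ℓ := by
  rw [intervalIntegral.integral_of_le hb]
  apply setIntegral_mono_set hgint
  · exact (ae_restrict_iff' measurableSet_Ioi).mpr (ae_of_all _ fun x hx => hg x hx)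
  · exact HasSubset.Subset.eventuallyLE Ioc_subset_Ioi_self

lemma expEta_mem {k₁ k₂ : ℝ} (hk₁ : 0 < k₁) (hk₂0 : 0 < k₂) (hk₂1 : k₂ < 1) (t : ℝ) :
    expEta k₁ k₂ t ∈ Set.Ioo (0:ℝ) 1 := by
  unfold expEta
  split_ifs with h
  · have he1 : Real.exp (-(k₁*t)) ≤ 1 := Real.exp_le_one_iff.mpr (by nlinarith)
    have he0 : 0 < Real.exp (-(k₁*t)) := Real.exp_pos _
    constructor <;> nlinarith
  · have h' : k₁ * t < 0 := mul_neg_of_pos_of_neg hk₁ (lt_of_not_ge h)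
    have he1 : Real.exp (k₁*t) < 1 := Real.exp_lt_one_iff.mpr h'
    have he0 := Real.exp_pos (k₁*t)
    constructor <;> nlinarith

lemma aux_bell_form {N : ℕ} (p₀ δ : ℝ) (fL η : ℝ → ℝ) (c : Fin 2 → Fin N → ℝ)
    (v : Fin N × Fin 2 → ℝ) (x : Fin N × Fin 2) (b : ℝ) :
    bellObj p₀ δ fL η c v x b = δ * (c x.2 x.1 + Wup η c v x.1 x.2
      + p₀ * (Wdown η c v x.1 x.2 - Wup η c v x.1 x.2)
      + ((∫ ℓ in (0:ℝ)..b, ℓ * fL ℓ)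
         - (Wup η c v x.1 x.2 - Wdown η c v x.1 x.2) * ∫ ℓ in (0:ℝ)..b, fL ℓ)) := by
  unfold bellObj lossCdf; ring

/-- in the 2-class model with exponential choice function, for every state
the infimum defining the Bellman operator at the fixed point `V*` is attained at the
unique point `b̄* = δ(κ−1)(η̄θ₁ + (1−η̄)θ₂)`, which is strictly positive. -/
theorem stmt_7 (p₀ δ μ M κ k₁ k₂ θ₁ θ₂ : ℝ) (fL : ℝ → ℝ)
    (hp₀ : p₀ ∈ Set.Ioo (0:ℝ) 1) (hδ : δ ∈ Set.Ioo (0:ℝ) 1)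
    (hκ : κ ∈ Set.Ioo (1:ℝ) 2)
    (hk₁ : k₁ ∈ Set.Ioo (0:ℝ) 1) (hk₂ : k₂ ∈ Set.Ioo (0:ℝ) 1)
    (hfc : ContinuousOn fL (Set.Ioi 0)) (hfpos : ∀ ℓ : ℝ, 0 < ℓ → 0 < fL ℓ)
    (hfint : IntegrableOn fL (Set.Ioi 0))
    (hftot : ∫ ℓ in Set.Ioi (0:ℝ), fL ℓ = 1 - p₀)
    (hmint : IntegrableOn (fun ℓ => ℓ * fL ℓ) (Set.Ioi 0))
    (hμ : μ = ∫ ℓ in Set.Ioi (0:ℝ), ℓ * fL ℓ) (hμpos : 0 < μ) (hM : κ * μ ≤ M)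
    (hθ₁ : θ₁ ∈ Set.Icc μ (M / κ)) (hθ₂ : θ₂ ∈ Set.Icc μ (M / κ))
    (V : Fin 2 × Fin 2 → ℝ)
    (hV : bellOp p₀ δ fL (expEta k₁ k₂) (prem2 κ θ₁ θ₂) V = V)
    (hVuniq : ∀ v : Fin 2 × Fin 2 → ℝ,
      bellOp p₀ δ fL (expEta k₁ k₂) (prem2 κ θ₁ θ₂) v = v → v = V) :
    0 < barrier2 δ κ k₁ k₂ θ₁ θ₂ ∧
    ∀ x : Fin 2 × Fin 2,
      bellOp p₀ δ fL (expEta k₁ k₂) (prem2 κ θ₁ θ₂) V x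
        = bellObj p₀ δ fL (expEta k₁ k₂) (prem2 κ θ₁ θ₂) V x
            (barrier2 δ κ k₁ k₂ θ₁ θ₂) ∧
      (∀ b : ℝ, 0 ≤ b →
        bellObj p₀ δ fL (expEta k₁ k₂) (prem2 κ θ₁ θ₂) V x (barrier2 δ κ k₁ k₂ θ₁ θ₂)
          ≤ bellObj p₀ δ fL (expEta k₁ k₂) (prem2 κ θ₁ θ₂) V x b) ∧
      (∀ b : ℝ, 0 ≤ b →
        bellObj p₀ δ fL (expEta k₁ k₂) (prem2 κ θ₁ θ₂) V x b
          = bellObj p₀ δ fL (expEta k₁ k₂) (prem2 κ θ₁ θ₂) V x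
              (barrier2 δ κ k₁ k₂ θ₁ θ₂) →
        b = barrier2 δ κ k₁ k₂ θ₁ θ₂) := by
  obtain ⟨hp0, hp1⟩ := hp₀
  obtain ⟨hδ0, hδ1⟩ := hδ
  obtain ⟨hκ1, hκ2⟩ := hκ
  have hEmem : expEta k₁ k₂ (θ₂ - θ₁) ∈ Set.Ioo (0:ℝ) 1 := expEta_mem hk₁.1 hk₂.1 hk₂.2 _
  have hθ₁0 : 0 < θ₁ := lt_of_lt_of_le hμpos hθ₁.1
  have hθ₂0 : 0 < θ₂ := lt_of_lt_of_le hμpos hθ₂.1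
  have hBpos : 0 < barrier2 δ κ k₁ k₂ θ₁ θ₂ := by
    unfold barrier2
    obtain ⟨he0, he1⟩ := hEmem
    have h1 : 0 < expEta k₁ k₂ (θ₂ - θ₁) * θ₁ := mul_pos he0 hθ₁0
    have h2 : 0 < (1 - expEta k₁ k₂ (θ₂ - θ₁)) * θ₂ := mul_pos (by linarith) hθ₂0
    have h3 : 0 < δ * (κ - 1) := mul_pos hδ0 (by linarith)
    nlinarith
  have hrd : ∀ n : Fin 2, rdown n = 0 := by decide
  have hru : ∀ n : Fin 2, rup n = 1 := by decide
  have hI0 : ∀ b : ℝ, 0 ≤ b →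
      0 ≤ (∫ ℓ in (0:ℝ)..b, fL ℓ) ∧ (∫ ℓ in (0:ℝ)..b, fL ℓ) ≤ 1 - p₀ := by
    intro b hb
    refine ⟨aux_nonneg fL (fun ℓ hℓ => (hfpos ℓ hℓ).le) hb, ?_⟩
    have := aux_le_total fL hfint (fun ℓ hℓ => (hfpos ℓ hℓ).le) hb
    rwa [hftot] at this
  have hI1 : ∀ b : ℝ, 0 ≤ b → 0 ≤ ∫ ℓ in (0:ℝ)..b, ℓ * fL ℓ := by
    intro b hb
    exact aux_nonneg _ (fun ℓ hℓ => (mul_pos hℓ (hfpos ℓ hℓ)).le) hb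
  -- bounded below
  have hbdd : ∀ x : Fin 2 × Fin 2, BddBelow (Set.range fun b : {b : ℝ // 0 ≤ b} =>
      bellObj p₀ δ fL (expEta k₁ k₂) (prem2 κ θ₁ θ₂) V x b.1) := by
    intro x
    refine ⟨δ * (prem2 κ θ₁ θ₂ x.2 x.1 + Wup (expEta k₁ k₂) (prem2 κ θ₁ θ₂) V x.1 x.2
      + p₀ * (Wdown (expEta k₁ k₂) (prem2 κ θ₁ θ₂) V x.1 x.2
              - Wup (expEta k₁ k₂) (prem2 κ θ₁ θ₂) V x.1 x.2)
      + (0 - |Wup (expEta k₁ k₂) (prem2 κ θ₁ θ₂) V x.1 x.2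
              - Wdown (expEta k₁ k₂) (prem2 κ θ₁ θ₂) V x.1 x.2| * (1 - p₀))), ?_⟩
    rintro y ⟨⟨b, hb⟩, rfl⟩
    dsimp only
    rw [aux_bell_form]
    apply mul_le_mul_of_nonneg_left _ hδ0.le
    have h0 := hI0 b hb
    have h1 := hI1 b hb
    set Δ := Wup (expEta k₁ k₂) (prem2 κ θ₁ θ₂) V x.1 x.2
      - Wdown (expEta k₁ k₂) (prem2 κ θ₁ θ₂) V x.1 x.2 with hΔdef
    have habs1 : Δ * (∫ ℓ in (0:ℝ)..b, fL ℓ) ≤ |Δ| * (∫ ℓ in (0:ℝ)..b, fL ℓ) :=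
      mul_le_mul_of_nonneg_right (le_abs_self Δ) h0.1
    have habs2 : |Δ| * (∫ ℓ in (0:ℝ)..b, fL ℓ) ≤ |Δ| * (1 - p₀) :=
      mul_le_mul_of_nonneg_left h0.2 (abs_nonneg Δ)
    linarith
  -- the objective at (1,i) is the objective at (0,i) plus a constant
  have hWdn : ∀ (n : Fin 2) (i : Fin 2),
      Wdown (expEta k₁ k₂) (prem2 κ θ₁ θ₂) V n i
        = Wdown (expEta k₁ k₂) (prem2 κ θ₁ θ₂) V 0 i := by
    intro n i; simp only [Wdown, swProb, hrd]
  have hWun : ∀ (n : Fin 2) (i : Fin 2),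
      Wup (expEta k₁ k₂) (prem2 κ θ₁ θ₂) V n i
        = Wup (expEta k₁ k₂) (prem2 κ θ₁ θ₂) V 0 i := by
    intro n i; simp only [Wup, swProb, hrd, hru]
  have hobjshift : ∀ (i : Fin 2) (b : ℝ),
      bellObj p₀ δ fL (expEta k₁ k₂) (prem2 κ θ₁ θ₂) V (1, i) b
        = bellObj p₀ δ fL (expEta k₁ k₂) (prem2 κ θ₁ θ₂) V (0, i) b
          + δ * ((κ - 1) * (if i = 0 then θ₁ else θ₂)) := by
    intro i b
    simp only [bellObj, prem2]
    rw [hWdn 1 i, hWdn 0 i, hWun 1 i, hWun 0 i]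
    simp only [show ((1 : Fin 2) = 0) = False by simp, if_false, if_true, if_pos rfl]
    ring
  have hinfshift : ∀ i : Fin 2,
      bellOp p₀ δ fL (expEta k₁ k₂) (prem2 κ θ₁ θ₂) V (1, i)
        = bellOp p₀ δ fL (expEta k₁ k₂) (prem2 κ θ₁ θ₂) V (0, i)
          + δ * ((κ - 1) * (if i = 0 then θ₁ else θ₂)) := by
    intro i
    unfold bellOp
    apply le_antisymm
    · rw [← sub_le_iff_le_add]
      apply le_ciInf; intro b
      rw [sub_le_iff_le_add]
      exact (ciInf_le (hbdd (1, i)) b).trans_eq (hobjshift i b.1)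
    · apply le_ciInf; intro b
      rw [hobjshift i b.1]
      exact add_le_add_left (ciInf_le (hbdd (0, i)) b) _
  have hD : ∀ i : Fin 2, V (1, i) = V (0, i) + δ * ((κ - 1) * (if i = 0 then θ₁ else θ₂)) := by
    intro i
    rw [← congrFun hV (1, i), ← congrFun hV (0, i)]
    exact hinfshift i
  have hD0 : V (1, 0) = V (0, 0) + δ * ((κ - 1) * θ₁) := by simpa using hD 0
  have hD1 : V (1, 1) = V (0, 1) + δ * ((κ - 1) * θ₂) := by simpa using hD 1
  -- the gap Wup - Wdown equals the barrier, in every state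
  have hΔ : ∀ x : Fin 2 × Fin 2,
      Wup (expEta k₁ k₂) (prem2 κ θ₁ θ₂) V x.1 x.2
        - Wdown (expEta k₁ k₂) (prem2 κ θ₁ θ₂) V x.1 x.2
        = barrier2 δ κ k₁ k₂ θ₁ θ₂ := by
    rintro ⟨n, i⟩
    fin_cases i <;>
      simp only [Fin.mk_zero, Fin.mk_one, Wup, Wdown, swProb, hrd, hru, prem2, barrier2,
        mul_one, show ((0:Fin 2) + 1) = 1 from rfl, show ((1:Fin 2) + 1) = 0 from rfl,
        show ((1 : Fin 2) = 0) = False by simp, if_false, if_true, if_pos rfl] <;>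
      linear_combination expEta k₁ k₂ (θ₂ - θ₁) * hD0 + (1 - expEta k₁ k₂ (θ₂ - θ₁)) * hD1
  -- difference formula
  have hdiff : ∀ (x : Fin 2 × Fin 2) (b : ℝ), 0 ≤ b →
      bellObj p₀ δ fL (expEta k₁ k₂) (prem2 κ θ₁ θ₂) V x b
        - bellObj p₀ δ fL (expEta k₁ k₂) (prem2 κ θ₁ θ₂) V x (barrier2 δ κ k₁ k₂ θ₁ θ₂)
        = δ * ∫ ℓ in (barrier2 δ κ k₁ k₂ θ₁ θ₂)..b,
            (ℓ - barrier2 δ κ k₁ k₂ θ₁ θ₂) * fL ℓ := by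
    intro x b hb
    rw [aux_bell_form, aux_bell_form, hΔ x,
      aux_split hfint hmint _ hBpos.le hb,
      ← intervalIntegral.integral_interval_sub_left
        (aux_ii hmint le_rfl hb) (aux_ii hmint le_rfl hBpos.le),
      ← intervalIntegral.integral_interval_sub_left
        (aux_ii hfint le_rfl hb) (aux_ii hfint le_rfl hBpos.le)]
    ring
  have hlt : ∀ (x : Fin 2 × Fin 2) (b : ℝ), 0 ≤ b → b ≠ barrier2 δ κ k₁ k₂ θ₁ θ₂ →
      bellObj p₀ δ fL (expEta k₁ k₂) (prem2 κ θ₁ θ₂) V x (barrier2 δ κ k₁ k₂ θ₁ θ₂)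
        < bellObj p₀ δ fL (expEta k₁ k₂) (prem2 κ θ₁ θ₂) V x b := by
    intro x b hb hne
    have h := hdiff x b hb
    have hpos := aux_key_pos hfpos hfint hmint hBpos hb hne
    nlinarith
  have hattain : ∀ x : Fin 2 × Fin 2,
      bellOp p₀ δ fL (expEta k₁ k₂) (prem2 κ θ₁ θ₂) V x
        = bellObj p₀ δ fL (expEta k₁ k₂) (prem2 κ θ₁ θ₂) V x (barrier2 δ κ k₁ k₂ θ₁ θ₂) := by
    intro x
    apply le_antisymm
    · exact ciInf_le (hbdd x) ⟨barrier2 δ κ k₁ k₂ θ₁ θ₂, hBpos.le⟩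
    · apply le_ciInf; intro b
      rcases eq_or_ne b.1 (barrier2 δ κ k₁ k₂ θ₁ θ₂) with h | h
      · rw [h]
      · exact (hlt x b.1 b.2 h).le
  refine ⟨hBpos, fun x => ⟨hattain x, fun b hb => ?_, fun b hb heq => ?_⟩⟩
  · rcases eq_or_ne b (barrier2 δ κ k₁ k₂ θ₁ θ₂) with h | h
    · rw [h]
    · exact (hlt x b hb h).le
  · by_contra h
    exact (hlt x b hb h).ne' heq

end
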